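/- For arbitrary integers a₁, a₂, a₃, b, c, e, assign to the 18 variables the integer weights w(pᵢ) = aᵢ (i = 1,2,3), w(qᵢ) = b − aᵢ, w(r) = c, w(u) = e, w(p₄) = 2c − e, w(s₁₂) = c − (b − a₃), w(s₁₃) = c − (b − a₂), w(s₂₃) = c − (b − a₁), w(s₁₁) = c + a₂ − a₁ − (b − a₃), w(s₂₂) = c + a₃ − a₂ − (b − a₁), w(s₃₃) = c + a₁ − a₃ − (b − a₂), w(t₁) = e + a₂ − c − (b − a₃), w(t₂) = e + a₃ − c − (b − a₁), w(t₃) = e + a₁ − c − (b − a₂). Then each of the nine generators of I_Σ is weighted homogeneous, of respective degrees d₀ = b; d₁ = c + a₁, d₂ = c + a₂, d₃ = c + a₃ (the three entries of (rI + AS)p + p₄·At); d₄ = c + a₁ + a₂ + a₃ − b (for pᵗSp + p₄·pᵗt); d₅ = e + a₁, d₆ = e + a₂, d₇ = e + a₃ (the three entries of up − (F₁,F₂,F₃)ᵗ); and d₈ = 2c (for up₄ − F₄). Moreover d₀ + d₁ + ⋯ + d₈ = 3δ, where δ := 2c + e + a₁ + a₂ + a₃. -/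

import Mathlib

/-!
`S_Σ = ℂ[p₁,p₂,p₃,p₄,q₁,q₂,q₃,r,u,s₁₁,s₁₂,s₁₃,s₂₂,s₂₃,s₃₃,t₁,t₂,t₃]` is the polynomial
ring in 18 variables, indexed by `Fin 18` in this order.  Writing `p`, `q`, `t` for the
corresponding column vectors, `S` for the symmetric matrix with entries `sᵢⱼ`, `A` for the
skew-symmetric matrix attached to `q`, `S†` for the adjugate of `S`,
`(F₁,F₂,F₃)ᵗ = (rI − AS)·A·t` and `F₄ = −(r² + qᵗ·S†·q)`, the ideal `I_Σ` is generated by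
the nine polynomials `pᵗ·q`, the three entries of `(rI + AS)·p + p₄·A·t`,
`pᵗ·S·p + p₄·pᵗ·t`, the three entries of `u·p − (F₁,F₂,F₃)ᵗ`, and `u·p₄ − F₄`.
`R_Σ = S_Σ/I_Σ`.
-/

open MvPolynomial Matrix

noncomputable section

/-- The polynomial ring in the 18 variables
`p₁,p₂,p₃,p₄,q₁,q₂,q₃,r,u,s₁₁,s₁₂,s₁₃,s₂₂,s₂₃,s₃₃,t₁,t₂,t₃` (in this order). -/
abbrev SSigma : Type := MvPolynomial (Fin 18) ℂ

/-- The column vector `p = (p₁,p₂,p₃)ᵗ`. -/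
def pVec : Fin 3 → SSigma := ![X 0, X 1, X 2]

/-- The column vector `q = (q₁,q₂,q₃)ᵗ`. -/
def qVec : Fin 3 → SSigma := ![X 4, X 5, X 6]

/-- The column vector `t = (t₁,t₂,t₃)ᵗ`. -/
def tVec : Fin 3 → SSigma := ![X 15, X 16, X 17]

/-- The symmetric matrix `S` with entries `sᵢⱼ`. -/
def Smat : Matrix (Fin 3) (Fin 3) SSigma :=
  !![X 9, X 10, X 11; X 10, X 12, X 13; X 11, X 13, X 14]

/-- The skew-symmetric matrix `A` associated to `q`. -/
def Amat : Matrix (Fin 3) (Fin 3) SSigma :=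
  !![0, -X 6, X 5; X 6, 0, -X 4; -X 5, X 4, 0]

/-- The vector of polynomials `(F₁,F₂,F₃)ᵗ = (rI − AS)·A·t`. -/
def Fvec : Fin 3 → SSigma :=
  ((X 7 : SSigma) • (1 : Matrix (Fin 3) (Fin 3) SSigma) - Amat * Smat) *ᵥ (Amat *ᵥ tVec)

/-- The polynomial `F₄ = −(r² + qᵗ·S†·q)`, where `S†` is the adjugate of `S`. -/
def F4 : SSigma := -((X 7) ^ 2 + qVec ⬝ᵥ (Smat.adjugate *ᵥ qVec))

/-- The nine generators of the ideal `I_Σ`: `pᵗ·q`; the three entries of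
`(rI + AS)·p + p₄·A·t`; `pᵗ·S·p + p₄·pᵗ·t`; the three entries of `u·p − (F₁,F₂,F₃)ᵗ`;
and `u·p₄ − F₄`. -/
def sigmaGens : Fin 9 → SSigma :=
  ![pVec ⬝ᵥ qVec,
    ((((X 7 : SSigma) • (1 : Matrix (Fin 3) (Fin 3) SSigma) + Amat * Smat) *ᵥ pVec) +
      (X 3 : SSigma) • (Amat *ᵥ tVec)) 0,
    ((((X 7 : SSigma) • (1 : Matrix (Fin 3) (Fin 3) SSigma) + Amat * Smat) *ᵥ pVec) +
      (X 3 : SSigma) • (Amat *ᵥ tVec)) 1,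
    ((((X 7 : SSigma) • (1 : Matrix (Fin 3) (Fin 3) SSigma) + Amat * Smat) *ᵥ pVec) +
      (X 3 : SSigma) • (Amat *ᵥ tVec)) 2,
    pVec ⬝ᵥ (Smat *ᵥ pVec) + X 3 * (pVec ⬝ᵥ tVec),
    ((X 8 : SSigma) • pVec - Fvec) 0,
    ((X 8 : SSigma) • pVec - Fvec) 1,
    ((X 8 : SSigma) • pVec - Fvec) 2,
    X 8 * X 3 - F4]

/-- The ideal `I_Σ ⊆ S_Σ`. -/
def ISigma : Ideal SSigma := Ideal.span (Set.range sigmaGens)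

/-- The quotient ring `R_Σ = S_Σ/I_Σ`. -/
abbrev RSigma : Type := SSigma ⧸ ISigma

/-- The weight assignment on the 18 variables determined by integers `a₁, a₂, a₃, b, c, e`:
`w(pᵢ) = aᵢ`, `w(qᵢ) = b − aᵢ`, `w(r) = c`, `w(u) = e`, `w(p₄) = 2c − e`,
`w(s₁₂) = c − (b − a₃)`, `w(s₁₃) = c − (b − a₂)`, `w(s₂₃) = c − (b − a₁)`,
`w(s₁₁) = c + a₂ − a₁ − (b − a₃)`, `w(s₂₂) = c + a₃ − a₂ − (b − a₁)`,
`w(s₃₃) = c + a₁ − a₃ − (b − a₂)`, `w(t₁) = e + a₂ − c − (b − a₃)`,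
`w(t₂) = e + a₃ − c − (b − a₁)`, `w(t₃) = e + a₁ − c − (b − a₂)`. -/
def wt (a₁ a₂ a₃ b c e : ℤ) : Fin 18 → ℤ :=
  ![a₁, a₂, a₃, 2 * c - e, b - a₁, b - a₂, b - a₃, c, e,
    c + a₂ - a₁ - (b - a₃), c - (b - a₃), c - (b - a₂),
    c + a₃ - a₂ - (b - a₁), c - (b - a₁), c + a₁ - a₃ - (b - a₂),
    e + a₂ - c - (b - a₃), e + a₃ - c - (b - a₁), e + a₁ - c - (b - a₂)]

/-- Each of the nine generators of `I_Σ` is weighted homogeneous for the above weights,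
of respective degrees `d₀ = b`, `d₁ = c + a₁`, `d₂ = c + a₂`, `d₃ = c + a₃`,
`d₄ = c + a₁ + a₂ + a₃ − b`, `d₅ = e + a₁`, `d₆ = e + a₂`, `d₇ = e + a₃`, `d₈ = 2c`;
moreover `d₀ + d₁ + ⋯ + d₈ = 3δ` where `δ = 2c + e + a₁ + a₂ + a₃`. -/

private lemma whX {w : Fin 18 → ℤ} (i : Fin 18) :
    IsWeightedHomogeneous w (X i : SSigma) (w i) :=
  isWeightedHomogeneous_X ℂ w i

private lemma whNeg {w : Fin 18 → ℤ} {φ : SSigma} {n : ℤ}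
    (h : IsWeightedHomogeneous w φ n) : IsWeightedHomogeneous w (-φ) n := by
  intro d hd
  exact h (by rwa [coeff_neg, neg_ne_zero] at hd)

private lemma whAdd {w : Fin 18 → ℤ} {φ ψ : SSigma} {n : ℤ}
    (h1 : IsWeightedHomogeneous w φ n) (h2 : IsWeightedHomogeneous w ψ n) :
    IsWeightedHomogeneous w (φ + ψ) n := h1.add h2

private lemma whSub {w : Fin 18 → ℤ} {φ ψ : SSigma} {n : ℤ}
    (h1 : IsWeightedHomogeneous w φ n) (h2 : IsWeightedHomogeneous w ψ n) :
    IsWeightedHomogeneous w (φ - ψ) n := by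
  rw [sub_eq_add_neg]; exact h1.add (whNeg h2)

private lemma whMul {w : Fin 18 → ℤ} {φ ψ : SSigma} {m n k : ℤ}
    (h1 : IsWeightedHomogeneous w φ m) (h2 : IsWeightedHomogeneous w ψ n)
    (h : m + n = k) : IsWeightedHomogeneous w (φ * ψ) k := h ▸ h1.mul h2

private lemma whSq {w : Fin 18 → ℤ} {φ : SSigma} {m k : ℤ}
    (h1 : IsWeightedHomogeneous w φ m) (h : m + m = k) :
    IsWeightedHomogeneous w (φ ^ 2) k := by
  rw [sq]; exact whMul h1 h1 h

private lemma wtv0 (a₁ a₂ a₃ b c e : ℤ) : wt a₁ a₂ a₃ b c e 0 = a₁ := rfl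
private lemma wtv1 (a₁ a₂ a₃ b c e : ℤ) : wt a₁ a₂ a₃ b c e 1 = a₂ := rfl
private lemma wtv2 (a₁ a₂ a₃ b c e : ℤ) : wt a₁ a₂ a₃ b c e 2 = a₃ := rfl
private lemma wtv3 (a₁ a₂ a₃ b c e : ℤ) : wt a₁ a₂ a₃ b c e 3 = 2 * c - e := rfl
private lemma wtv4 (a₁ a₂ a₃ b c e : ℤ) : wt a₁ a₂ a₃ b c e 4 = b - a₁ := rfl
private lemma wtv5 (a₁ a₂ a₃ b c e : ℤ) : wt a₁ a₂ a₃ b c e 5 = b - a₂ := rfl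
private lemma wtv6 (a₁ a₂ a₃ b c e : ℤ) : wt a₁ a₂ a₃ b c e 6 = b - a₃ := rfl
private lemma wtv7 (a₁ a₂ a₃ b c e : ℤ) : wt a₁ a₂ a₃ b c e 7 = c := rfl
private lemma wtv8 (a₁ a₂ a₃ b c e : ℤ) : wt a₁ a₂ a₃ b c e 8 = e := rfl
private lemma wtv9 (a₁ a₂ a₃ b c e : ℤ) : wt a₁ a₂ a₃ b c e 9 = c + a₂ - a₁ - (b - a₃) := rfl
private lemma wtv10 (a₁ a₂ a₃ b c e : ℤ) : wt a₁ a₂ a₃ b c e 10 = c - (b - a₃) := rfl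
private lemma wtv11 (a₁ a₂ a₃ b c e : ℤ) : wt a₁ a₂ a₃ b c e 11 = c - (b - a₂) := rfl
private lemma wtv12 (a₁ a₂ a₃ b c e : ℤ) : wt a₁ a₂ a₃ b c e 12 = c + a₃ - a₂ - (b - a₁) := rfl
private lemma wtv13 (a₁ a₂ a₃ b c e : ℤ) : wt a₁ a₂ a₃ b c e 13 = c - (b - a₁) := rfl
private lemma wtv14 (a₁ a₂ a₃ b c e : ℤ) : wt a₁ a₂ a₃ b c e 14 = c + a₁ - a₃ - (b - a₂) := rfl
private lemma wtv15 (a₁ a₂ a₃ b c e : ℤ) : wt a₁ a₂ a₃ b c e 15 = e + a₂ - c - (b - a₃) := rfl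
private lemma wtv16 (a₁ a₂ a₃ b c e : ℤ) : wt a₁ a₂ a₃ b c e 16 = e + a₃ - c - (b - a₁) := rfl
private lemma wtv17 (a₁ a₂ a₃ b c e : ℤ) : wt a₁ a₂ a₃ b c e 17 = e + a₁ - c - (b - a₂) := rfl

set_option maxHeartbeats 3000000 in
theorem sigma_generators_weighted_homogeneous (a₁ a₂ a₃ b c e : ℤ) :
    IsWeightedHomogeneous (wt a₁ a₂ a₃ b c e) (sigmaGens 0) b ∧
    IsWeightedHomogeneous (wt a₁ a₂ a₃ b c e) (sigmaGens 1) (c + a₁) ∧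
    IsWeightedHomogeneous (wt a₁ a₂ a₃ b c e) (sigmaGens 2) (c + a₂) ∧
    IsWeightedHomogeneous (wt a₁ a₂ a₃ b c e) (sigmaGens 3) (c + a₃) ∧
    IsWeightedHomogeneous (wt a₁ a₂ a₃ b c e) (sigmaGens 4) (c + a₁ + a₂ + a₃ - b) ∧
    IsWeightedHomogeneous (wt a₁ a₂ a₃ b c e) (sigmaGens 5) (e + a₁) ∧
    IsWeightedHomogeneous (wt a₁ a₂ a₃ b c e) (sigmaGens 6) (e + a₂) ∧
    IsWeightedHomogeneous (wt a₁ a₂ a₃ b c e) (sigmaGens 7) (e + a₃) ∧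
    IsWeightedHomogeneous (wt a₁ a₂ a₃ b c e) (sigmaGens 8) (2 * c) ∧
    b + (c + a₁) + (c + a₂) + (c + a₃) + (c + a₁ + a₂ + a₃ - b) +
        (e + a₁) + (e + a₂) + (e + a₃) + 2 * c =
      3 * (2 * c + e + a₁ + a₂ + a₃) := by
  refine ⟨?_, ?_, ?_, ?_, ?_, ?_, ?_, ?_, ?_, by ring⟩ <;>
  · simp only [sigmaGens, Fvec, F4, Smat, Amat, pVec, qVec, tVec, Matrix.cons_val', Matrix.cons_val, Matrix.cons_val_zero, Matrix.cons_val_one, Matrix.head_cons, Matrix.adjugate_fin_three, Matrix.add_mulVec, Matrix.sub_mulVec, Matrix.smul_mulVec, Matrix.one_mulVec, ← Matrix.mulVec_mulVec, Matrix.mulVec, dotProduct, Fin.sum_univ_three, Matrix.smul_apply, Matrix.of_apply, Matrix.cons_val_fin_one, Matrix.head_fin_const, Matrix.empty_val', Matrix.cons_val_two, Matrix.tail_cons, Pi.add_apply, Pi.sub_apply, Pi.smul_apply, smul_eq_mul, Matrix.one_apply_eq, Matrix.one_apply_ne, mul_zero, zero_mul, mul_one, one_mul, add_zero, zero_add, neg_mul,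 mul_neg, neg_neg, Fin.isValue, ite_true, ite_false, if_true, if_false, reduceIte]
    repeat'
      first
      | apply whAdd
      | apply whSub
      | apply whNeg
      | with_reducible apply whSq
      | apply whMul
      | exact whX _
    all_goals try simp only [wtv0, wtv1, wtv2, wtv3, wtv4, wtv5, wtv6, wtv7, wtv8, wtv9, wtv10, wtv11, wtv12, wtv13, wtv14, wtv15, wtv16, wtv17]
    all_goals first | rfl | ring
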